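/- For all positive integers n and real q with 0 < q < 1: ∑_{n ≥ j ≥ k ≥ m ≥ p ≥ 1} q^{j+k+m+p}/([j]_q [k]_q [m]_q^3 [p]_q) = ∑_{n ≥ k ≥ m ≥ p ≥ 1} (-1)^{k+1} q^{k(k+1)/2} C_q(n,k) q^{2k+p}/([k]_q^3 [m]_q [p]_q^2). -/

import Mathlib

/-- Gaussian binomial coefficient, vanishing unless `k ≤ n`. -/
noncomputable def qbinom (q : ℝ) (n k : ℕ) : ℝ :=
  if k ≤ n then ∏ j ∈ Finset.Icc 1 k, (1 - q ^ (n - k + j)) / (1 - q ^ j) else 0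

/-- The `q`-analog of a natural number: `[k]_q = (1-q^k)/(1-q)`. -/
noncomputable def qnum (q : ℝ) (k : ℕ) : ℝ := (1 - q ^ k) / (1 - q)

open Finset

noncomputable def qPoch (q : ℝ) (a k : ℕ) : ℝ := ∏ i ∈ Finset.range k, (1 - q ^ (a + i))

noncomputable def qSgn (q : ℝ) (k : ℕ) : ℝ := (-1) ^ (k + 1) * q ^ Nat.choose k 2

section basic
variable {q : ℝ}

lemma qd_pos (hq0 : 0 < q) (hq1 : q < 1) {j : ℕ} (hj : 1 ≤ j) : 0 < 1 - q ^ j := by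
  have h : q ^ j < 1 := pow_lt_one₀ hq0.le hq1 (by omega)
  linarith

lemma qd_ne (hq0 : 0 < q) (hq1 : q < 1) {j : ℕ} (hj : 1 ≤ j) : 1 - q ^ j ≠ 0 :=
  (qd_pos hq0 hq1 hj).ne'

lemma qPoch_succ (a k : ℕ) : qPoch q a (k + 1) = qPoch q a k * (1 - q ^ (a + k)) := by
  rw [qPoch, prod_range_succ, qPoch]

lemma qPoch_succ' (a k : ℕ) : qPoch q a (k + 1) = (1 - q ^ a) * qPoch q (a + 1) k := by
  rw [qPoch, prod_range_succ', add_zero, mul_comm, qPoch]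
  congr 1
  exact Finset.prod_congr rfl fun i _ => by rw [show a + (i + 1) = a + 1 + i by omega]

lemma qPoch_ne (hq0 : 0 < q) (hq1 : q < 1) {a : ℕ} (ha : 1 ≤ a) (k : ℕ) :
    qPoch q a k ≠ 0 :=
  Finset.prod_ne_zero_iff.mpr fun i _ => qd_ne hq0 hq1 (by omega)

lemma qPoch_rec (a k : ℕ) :
    (1 - q ^ a) * qPoch q (a + 1) k = (1 - q ^ (a + k)) * qPoch q a k := by
  rw [← qPoch_succ', qPoch_succ]; ring

lemma qbinom_eq {n k : ℕ} (hk : k ≤ n) :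
    qbinom q n k = qPoch q (n - k + 1) k / qPoch q 1 k := by
  rw [qbinom, if_pos hk, qPoch, qPoch, ← Finset.prod_div_distrib,
    ← Finset.Ico_add_one_right_eq_Icc, Finset.prod_Ico_eq_prod_range]
  exact Finset.prod_congr rfl fun i _ => by
    rw [show n - k + (1 + i) = n - k + 1 + i by omega, show 1 + i = 1 + i from rfl]

lemma qbinom_self (hq0 : 0 < q) (hq1 : q < 1) (k : ℕ) : qbinom q k k = 1 := by
  rw [qbinom_eq le_rfl, Nat.sub_self]
  exact div_self (qPoch_ne hq0 hq1 le_rfl k)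

lemma qbinom_one (hq0 : 0 < q) (hq1 : q < 1) {N : ℕ} (hN : 1 ≤ N) :
    qbinom q N 1 = (1 - q ^ N) / (1 - q) := by
  rw [qbinom_eq hN, qPoch, qPoch]
  simp only [Finset.prod_range_one, add_zero]
  rw [show N - 1 + 1 = N by omega, pow_one]

lemma qbinom_R1 (hq0 : 0 < q) (hq1 : q < 1) {n k : ℕ} (hk : k ≤ n) :
    qbinom q (n + 1) k * (1 - q ^ (n + 1 - k)) = qbinom q n k * (1 - q ^ (n + 1)) := by
  have h := qPoch_rec (q := q) (n - k + 1) k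
  rw [show n - k + 1 + k = n + 1 by omega] at h
  rw [qbinom_eq (hk.trans (Nat.le_succ n)), qbinom_eq hk,
    show n + 1 - k + 1 = n - k + 1 + 1 by omega, show n + 1 - k = n - k + 1 by omega]
  have h1 : qPoch q 1 k ≠ 0 := qPoch_ne hq0 hq1 le_rfl k
  field_simp
  linear_combination h

lemma qbinom_R2 (hq0 : 0 < q) (hq1 : q < 1) {N m : ℕ} (hm : m < N) :
    qbinom q N (m + 1) * (1 - q ^ (m + 1)) = qbinom q N m * (1 - q ^ (N - m)) := by
  rw [qbinom_eq (by omega : m + 1 ≤ N), qbinom_eq hm.le,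
    show N - (m + 1) + 1 = N - m by omega, qPoch_succ', qPoch_succ,
    show N - m + 1 = N - m + 1 from rfl]
  have h1 : qPoch q 1 m ≠ 0 := qPoch_ne hq0 hq1 le_rfl m
  have h2 : (1 : ℝ) - q ^ (1 + m) ≠ 0 := qd_ne hq0 hq1 (by omega)
  rw [show (1 : ℕ) + m = m + 1 by omega] at h2 ⊢
  field_simp
noncomputable def qHs (q : ℝ) (m : ℕ) : ℝ := ∑ p ∈ Finset.Icc 1 m, q ^ p / (1 - q ^ p)
noncomputable def qBs (q : ℝ) (m : ℕ) : ℝ := ∑ p ∈ Finset.Icc 1 m, q ^ p / (1 - q ^ p) ^ 2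
noncomputable def qSs (q : ℝ) (k : ℕ) : ℝ := ∑ m ∈ Finset.Icc 1 k, qBs q m / (1 - q ^ m)

lemma kk2 (k : ℕ) : k * (k + 1) / 2 = k.choose 2 + k := by
  cases k with
  | zero => rfl
  | succ j =>
    rw [Nat.choose_two_right]
    simp only [Nat.add_sub_cancel]
    rw [show (j + 1) * (j + 1 + 1) = (j + 1) * j + (j + 1) * 2 by ring,
      Nat.add_mul_div_right _ _ (by norm_num : 0 < 2)]
lemma qSgn_one : qSgn q 1 = 1 := by
  rw [qSgn]; norm_num

lemma qSgn_succ (m : ℕ) : qSgn q (m + 1) = -(q ^ m * qSgn q m) := by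
  rw [qSgn, qSgn, show (m+1).choose 2 = m.choose 1 + m.choose 2 from Nat.choose_succ_succ m 1,
    Nat.choose_one_right, pow_add, pow_succ]
  ring

lemma L1 (hq0 : 0 < q) (hq1 : q < 1) {k : ℕ} (hk : 1 ≤ k) :
    ∀ n, k ≤ n → ∑ j ∈ Icc k n, q ^ j / (1 - q ^ j) * qbinom q j k
      = qbinom q n k * q ^ k / (1 - q ^ k) := by
  intro n hn
  induction n, hn using Nat.le_induction with
  | base =>
    rw [Icc_self, sum_singleton, qbinom_self hq0 hq1, one_mul, mul_one]
  | succ n hn ih =>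
    rw [← Finset.Ico_add_one_right_eq_Icc, Finset.sum_Ico_succ_top (by omega), Finset.Ico_add_one_right_eq_Icc, ih]
    have h := qbinom_R1 hq0 hq1 (q := q) hn
    have hxy : q ^ k * q ^ (n + 1 - k) = q ^ (n + 1) := by
      rw [← pow_add]; congr 1; omega
    have h1 : (1 : ℝ) - q ^ k ≠ 0 := qd_ne hq0 hq1 hk
    have h2 : (1 : ℝ) - q ^ (n + 1) ≠ 0 := qd_ne hq0 hq1 (by omega)
    rw [← hxy] at h h2 ⊢
    field_simp
    linear_combination (-1 : ℝ) * h

lemma L2 (hq0 : 0 < q) (hq1 : q < 1) (N : ℕ) :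
    ∀ t m, 1 ≤ m → m + t = N →
      ∑ k ∈ Icc m N, qSgn q k * qbinom q N k
        = qSgn q m * qbinom q N m * (1 - q ^ m) / (1 - q ^ N) := by
  intro t
  induction t with
  | zero =>
    intro m hm hmN
    obtain rfl : m = N := by omega
    rw [Icc_self, sum_singleton, mul_div_assoc,
      div_self (qd_ne hq0 hq1 (by omega)), mul_one]
  | succ t ih =>
    intro m hm hmN
    have hmN' : m < N := by omega
    rw [show Icc m N = insert m (Icc (m + 1) N) from by
        ext x; simp only [mem_Icc, mem_insert]; omega,
      Finset.sum_insert (by simp only [mem_Icc]; omega),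
      ih (m + 1) (by omega) (by omega)]
    have h := qbinom_R2 hq0 hq1 (q := q) hmN'
    have hJ := qSgn_succ (q := q) m
    have hxy : q ^ m * q ^ (N - m) = q ^ N := by rw [← pow_add]; congr 1; omega
    have h1 : (1 : ℝ) - q ^ (m + 1) ≠ 0 := qd_ne hq0 hq1 (by omega)
    have h2 : (1 : ℝ) - q ^ N ≠ 0 := qd_ne hq0 hq1 (by omega)
    rw [hJ, ← hxy] at *
    field_simp
    linear_combination (-(q ^ m * qSgn q m)) * h

lemma E1 (hq0 : 0 < q) (hq1 : q < 1) {N : ℕ} (hN : 1 ≤ N) :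
    ∑ k ∈ Icc 1 N, qSgn q k * qbinom q N k = 1 := by
  rw [L2 hq0 hq1 N (N - 1) 1 le_rfl (by omega), qSgn_one, qbinom_one hq0 hq1 hN]
  have h1 : (1 : ℝ) - q ≠ 0 := by
    have := qd_ne hq0 hq1 (le_refl 1); rwa [pow_one] at this
  have h2 : (1 : ℝ) - q ^ N ≠ 0 := qd_ne hq0 hq1 hN
  rw [pow_one]
  field_simp

lemma sum_swap1 (n : ℕ) (F : ℕ → ℕ → ℝ) :
    ∑ j ∈ Icc 1 n, ∑ k ∈ Icc 1 j, F j k = ∑ k ∈ Icc 1 n, ∑ j ∈ Icc k n, F j k := by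
  have h := Finset.sum_Ico_Ico_comm 1 (n + 1) (fun k j => F j k)
  simpa only [Finset.Ico_add_one_right_eq_Icc] using h.symm

lemma moveB (hq0 : 0 < q) (hq1 : q < 1) (f : ℕ → ℝ) (n : ℕ) :
    ∑ k ∈ Icc 1 n, qSgn q k * (q ^ k / (1 - q ^ k)) * qbinom q n k * f k
      = ∑ j ∈ Icc 1 n, q ^ j / (1 - q ^ j) * ∑ k ∈ Icc 1 j, qSgn q k * qbinom q j k * f k := by
  have step1 : ∑ j ∈ Icc 1 n, q ^ j / (1 - q ^ j) * ∑ k ∈ Icc 1 j, qSgn q k * qbinom q j k * f k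
      = ∑ j ∈ Icc 1 n, ∑ k ∈ Icc 1 j,
          qSgn q k * f k * (q ^ j / (1 - q ^ j) * qbinom q j k) := by
    refine Finset.sum_congr rfl fun j _ => ?_
    rw [Finset.mul_sum]
    exact Finset.sum_congr rfl fun k _ => by ring
  rw [step1, sum_swap1]
  refine Finset.sum_congr rfl fun k hk => ?_
  rw [mem_Icc] at hk
  rw [← Finset.mul_sum, L1 hq0 hq1 hk.1 n hk.2]
  ring

lemma moveA (hq0 : 0 < q) (hq1 : q < 1) (g : ℕ → ℝ) {N : ℕ} (hN : 1 ≤ N) :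
    ∑ k ∈ Icc 1 N, qSgn q k * qbinom q N k * (∑ m ∈ Icc 1 k, g m)
      = ∑ m ∈ Icc 1 N, g m * (qSgn q m * qbinom q N m * (1 - q ^ m) / (1 - q ^ N)) := by
  have step1 : ∑ k ∈ Icc 1 N, qSgn q k * qbinom q N k * (∑ m ∈ Icc 1 k, g m)
      = ∑ k ∈ Icc 1 N, ∑ m ∈ Icc 1 k, g m * (qSgn q k * qbinom q N k) := by
    refine Finset.sum_congr rfl fun k _ => ?_
    rw [Finset.mul_sum]
    exact Finset.sum_congr rfl fun m _ => by ring
  rw [step1, sum_swap1 N (fun k m => g m * (qSgn q k * qbinom q N k))]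
  refine Finset.sum_congr rfl fun m hm => ?_
  rw [mem_Icc] at hm
  rw [← Finset.mul_sum, L2 hq0 hq1 N (N - m) m hm.1 (by omega)]
lemma E2 (hq0 : 0 < q) (hq1 : q < 1) (m : ℕ) :
    ∑ k ∈ Icc 1 m, qSgn q k * (q ^ k / (1 - q ^ k)) * qbinom q m k = qHs q m := by
  have h := moveB hq0 hq1 (fun _ => 1) m
  simp only [mul_one] at h
  rw [h, qHs]
  refine Finset.sum_congr rfl fun j hj => ?_
  rw [mem_Icc] at hj
  rw [E1 hq0 hq1 hj.1, mul_one]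

lemma E3 (hq0 : 0 < q) (hq1 : q < 1) {N : ℕ} (hN : 1 ≤ N) :
    ∑ k ∈ Icc 1 N, qSgn q k * qbinom q N k * qBs q k = qHs q N / (1 - q ^ N) := by
  have h := moveA hq0 hq1 (fun p => q ^ p / (1 - q ^ p) ^ 2) hN
  simp only [qBs]
  rw [h, ← E2 hq0 hq1 N, Finset.sum_div]
  refine Finset.sum_congr rfl fun m hm => ?_
  rw [mem_Icc] at hm
  have hd : (1 : ℝ) - q ^ m ≠ 0 := qd_ne hq0 hq1 hm.1
  have hdN : (1 : ℝ) - q ^ N ≠ 0 := qd_ne hq0 hq1 hN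
  field_simp

lemma E4 (hq0 : 0 < q) (hq1 : q < 1) {N : ℕ} (hN : 1 ≤ N) :
    ∑ k ∈ Icc 1 N, qSgn q k * qbinom q N k * qSs q k = qHs q N / (1 - q ^ N) ^ 2 := by
  have h := moveA hq0 hq1 (fun m => qBs q m / (1 - q ^ m)) hN
  simp only [qSs]
  rw [h, pow_two, ← div_div, ← E3 hq0 hq1 hN, Finset.sum_div]
  refine Finset.sum_congr rfl fun m hm => ?_
  rw [mem_Icc] at hm
  have hd : (1 : ℝ) - q ^ m ≠ 0 := qd_ne hq0 hq1 hm.1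
  have hdN : (1 : ℝ) - q ^ N ≠ 0 := qd_ne hq0 hq1 hN
  field_simp

lemma E5 (hq0 : 0 < q) (hq1 : q < 1) (N : ℕ) :
    ∑ k ∈ Icc 1 N, qSgn q k * (q ^ k / (1 - q ^ k)) * qbinom q N k * qSs q k
      = ∑ m ∈ Icc 1 N, q ^ m / (1 - q ^ m) * (qHs q m / (1 - q ^ m) ^ 2) := by
  rw [moveB hq0 hq1 (qSs q) N]
  refine Finset.sum_congr rfl fun j hj => ?_
  rw [mem_Icc] at hj
  rw [E4 hq0 hq1 hj.1]

lemma E6 (hq0 : 0 < q) (hq1 : q < 1) (N : ℕ) :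
    ∑ k ∈ Icc 1 N, qSgn q k * (q ^ k / (1 - q ^ k)) * qbinom q N k
        * (q ^ k / (1 - q ^ k) * qSs q k)
      = ∑ j ∈ Icc 1 N, q ^ j / (1 - q ^ j)
          * ∑ m ∈ Icc 1 j, q ^ m / (1 - q ^ m) * (qHs q m / (1 - q ^ m) ^ 2) := by
  rw [moveB hq0 hq1 (fun k => q ^ k / (1 - q ^ k) * qSs q k) N]
  refine Finset.sum_congr rfl fun j hj => ?_
  congr 1
  have h : ∑ k ∈ Icc 1 j, qSgn q k * qbinom q j k * (q ^ k / (1 - q ^ k) * qSs q k)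
      = ∑ k ∈ Icc 1 j, qSgn q k * (q ^ k / (1 - q ^ k)) * qbinom q j k * qSs q k :=
    Finset.sum_congr rfl fun k _ => by ring
  rw [h, E5 hq0 hq1 j]

lemma E7 (hq0 : 0 < q) (hq1 : q < 1) (n : ℕ) :
    ∑ k ∈ Icc 1 n, qSgn q k * (q ^ k / (1 - q ^ k)) * qbinom q n k
        * ((q ^ k / (1 - q ^ k)) ^ 2 * qSs q k)
      = ∑ j ∈ Icc 1 n, q ^ j / (1 - q ^ j)
          * ∑ k ∈ Icc 1 j, q ^ k / (1 - q ^ k)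
            * ∑ m ∈ Icc 1 k, q ^ m / (1 - q ^ m) * (qHs q m / (1 - q ^ m) ^ 2) := by
  rw [moveB hq0 hq1 (fun k => (q ^ k / (1 - q ^ k)) ^ 2 * qSs q k) n]
  refine Finset.sum_congr rfl fun j hj => ?_
  congr 1
  have h : ∑ k ∈ Icc 1 j, qSgn q k * qbinom q j k * ((q ^ k / (1 - q ^ k)) ^ 2 * qSs q k)
      = ∑ k ∈ Icc 1 j, qSgn q k * (q ^ k / (1 - q ^ k)) * qbinom q j k
          * (q ^ k / (1 - q ^ k) * qSs q k) :=
    Finset.sum_congr rfl fun k _ => by ring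
  rw [h, E6 hq0 hq1 j]
end basic

theorem example1 (n : ℕ) (hn : 0 < n) (q : ℝ) (hq0 : 0 < q) (hq1 : q < 1) :
    (∑ j ∈ Finset.Icc 1 n, ∑ k ∈ Finset.Icc 1 j, ∑ m ∈ Finset.Icc 1 k,
      ∑ p ∈ Finset.Icc 1 m,
        q ^ (j + k + m + p) / (qnum q j * qnum q k * (qnum q m) ^ 3 * qnum q p))
    = ∑ k ∈ Finset.Icc 1 n, ∑ m ∈ Finset.Icc 1 k, ∑ p ∈ Finset.Icc 1 m,
        (-1 : ℝ) ^ (k + 1) * q ^ (k * (k + 1) / 2) * qbinom q n k *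
          (q ^ (2 * k + p) / ((qnum q k) ^ 3 * qnum q m * (qnum q p) ^ 2)) := by
  have hq : (1 : ℝ) - q ≠ 0 := by linarith
  have hL : (∑ j ∈ Finset.Icc 1 n, ∑ k ∈ Finset.Icc 1 j, ∑ m ∈ Finset.Icc 1 k,
      ∑ p ∈ Finset.Icc 1 m,
        q ^ (j + k + m + p) / (qnum q j * qnum q k * (qnum q m) ^ 3 * qnum q p))
      = (1 - q) ^ 6 * ∑ j ∈ Icc 1 n, q ^ j / (1 - q ^ j)
          * ∑ k ∈ Icc 1 j, q ^ k / (1 - q ^ k)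
            * ∑ m ∈ Icc 1 k, q ^ m / (1 - q ^ m) * (qHs q m / (1 - q ^ m) ^ 2) := by
    rw [Finset.mul_sum]
    refine Finset.sum_congr rfl fun j hj => ?_
    rw [mem_Icc] at hj
    simp only [qHs, Finset.sum_div, Finset.mul_sum]
    refine Finset.sum_congr rfl fun k hk => ?_
    rw [mem_Icc] at hk
    refine Finset.sum_congr rfl fun m hm => ?_
    rw [mem_Icc] at hm
    refine Finset.sum_congr rfl fun p hp => ?_
    rw [mem_Icc] at hp
    have d1 : (1 : ℝ) - q ^ j ≠ 0 := qd_ne hq0 hq1 hj.1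
    have d2 : (1 : ℝ) - q ^ k ≠ 0 := qd_ne hq0 hq1 hk.1
    have d3 : (1 : ℝ) - q ^ m ≠ 0 := qd_ne hq0 hq1 hm.1
    have d4 : (1 : ℝ) - q ^ p ≠ 0 := qd_ne hq0 hq1 hp.1
    simp only [qnum]
    field_simp
    ring
  have hR : (∑ k ∈ Finset.Icc 1 n, ∑ m ∈ Finset.Icc 1 k, ∑ p ∈ Finset.Icc 1 m,
        (-1 : ℝ) ^ (k + 1) * q ^ (k * (k + 1) / 2) * qbinom q n k *
          (q ^ (2 * k + p) / ((qnum q k) ^ 3 * qnum q m * (qnum q p) ^ 2)))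
      = (1 - q) ^ 6 * ∑ k ∈ Icc 1 n, qSgn q k * (q ^ k / (1 - q ^ k)) * qbinom q n k
          * ((q ^ k / (1 - q ^ k)) ^ 2 * qSs q k) := by
    rw [Finset.mul_sum]
    refine Finset.sum_congr rfl fun k hk => ?_
    rw [mem_Icc] at hk
    simp only [qSs, qBs, Finset.sum_div, Finset.mul_sum]
    refine Finset.sum_congr rfl fun m hm => ?_
    rw [mem_Icc] at hm
    refine Finset.sum_congr rfl fun p hp => ?_
    rw [mem_Icc] at hp
    have d2 : (1 : ℝ) - q ^ k ≠ 0 := qd_ne hq0 hq1 hk.1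
    have d3 : (1 : ℝ) - q ^ m ≠ 0 := qd_ne hq0 hq1 hm.1
    have d4 : (1 : ℝ) - q ^ p ≠ 0 := qd_ne hq0 hq1 hp.1
    rw [kk2 k, pow_add]
    simp only [qSgn, qnum]
    field_simp
    ring
  rw [hL, hR, E7 hq0 hq1 n]
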